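/- Let Q^l, Q^{l-1} be Markov kernels on ℝ^d with coupling Q̌ such that (a) for each y, ∫|y^l - y^{l-1}|² Q̌((y,y), d(y^l,y^{l-1})) ≤ C₀ h^β, and (b) Q^l has the Lipschitz coupling property: for all y,y' there is a coupling of Q^l(y,·), Q^l(y',·) with second moment of the difference at most C₁²|y-y'|². Then for all y, y', (∫ |y^l - y^{l-1}|² Q̌((y,y'), d(y^l,y^{l-1})))^{1/2} ≤ C (|y - y'| + h^{β/2}) for a constant C depending only on C₀, C₁, where Q̌((y,y'),·) is any coupling of Q^l(y,·) and Q^{l-1}(y',·). -/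

import Mathlib

open MeasureTheory ProbabilityTheory

section aux

variable {E : Type*} [NormedAddCommGroup E] [MeasurableSpace E] [BorelSpace E]
  [SecondCountableTopology E]

lemma aux_meas : Measurable fun p : E × E => ENNReal.ofReal (‖p.1 - p.2‖ ^ 2) := by
  fun_prop

end aux

lemma ofReal_sq_rpow (a : ℝ) (ha : 0 ≤ a) :
    ENNReal.ofReal (a ^ 2) = ENNReal.ofReal a ^ (2 : ℝ) := by
  rw [ENNReal.ofReal_pow ha, ← ENNReal.rpow_natCast]
  norm_num

/-- Strong coupling error with different starting points: if (a) the diagonal coupling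
`Q̌((y,y),·)` of `Q^l, Q^{l-1}` has second moment `≤ C₀ h^β`, and (b) `Q^l` has the
Lipschitz coupling property with constant `C₁`, then for all `y, y'` there is a coupling
of `Q^l(y,·)` and `Q^{l-1}(y',·)` with
`(∫ ‖y^l - y^{l-1}‖²)^{1/2} ≤ C (‖y-y'‖ + h^{β/2})`, `C` depending only on `C₀, C₁`. -/
theorem stmt8 (d : ℕ) (C₀ C₁ : ℝ) (hC₀ : 0 < C₀) (hC₁ : 0 < C₁) :
    ∃ C : ℝ, 0 < C ∧
    ∀ (Ql Qlm : Kernel (EuclideanSpace ℝ (Fin d)) (EuclideanSpace ℝ (Fin d))),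
      IsMarkovKernel Ql → IsMarkovKernel Qlm →
    ∀ (Qc : Kernel (EuclideanSpace ℝ (Fin d) × EuclideanSpace ℝ (Fin d))
          (EuclideanSpace ℝ (Fin d) × EuclideanSpace ℝ (Fin d))),
      IsMarkovKernel Qc →
      (∀ y, (Qc (y, y)).map Prod.fst = Ql y) →
      (∀ y, (Qc (y, y)).map Prod.snd = Qlm y) →
    ∀ (h β : ℝ), 0 < h → 0 < β →
      (∀ y, (∫⁻ p, ENNReal.ofReal (‖p.1 - p.2‖ ^ 2) ∂(Qc (y, y)))
          ≤ ENNReal.ofReal (C₀ * h ^ β)) →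
      (∀ y y', ∃ R : Measure (EuclideanSpace ℝ (Fin d) × EuclideanSpace ℝ (Fin d)),
          IsProbabilityMeasure R ∧
          R.map Prod.fst = Ql y ∧ R.map Prod.snd = Ql y' ∧
          (∫⁻ p, ENNReal.ofReal (‖p.1 - p.2‖ ^ 2) ∂(R))
            ≤ ENNReal.ofReal (C₁ ^ 2 * ‖y - y'‖ ^ 2)) →
    ∀ y y', ∃ R : Measure (EuclideanSpace ℝ (Fin d) × EuclideanSpace ℝ (Fin d)),
      IsProbabilityMeasure R ∧
      R.map Prod.fst = Ql y ∧ R.map Prod.snd = Qlm y' ∧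
      (∫⁻ p, ENNReal.ofReal (‖p.1 - p.2‖ ^ 2) ∂(R)) ^ ((1:ℝ) / 2)
        ≤ ENNReal.ofReal (C * (‖y - y'‖ + h ^ (β / 2))) := by
  set E := EuclideanSpace ℝ (Fin d)
  refine ⟨C₁ + Real.sqrt C₀, by positivity, ?_⟩
  intro Ql Qlm hQl hQlm Qc hQc hcfst hcsnd h β hh hβ ha hb y y'
  obtain ⟨R₁, hR₁P, hR₁f, hR₁s, hR₁int⟩ := hb y y'
  set R₂ : Measure (E × E) := Qc (y', y') with hR₂
  haveI : IsProbabilityMeasure R₂ := hQc.isProbabilityMeasure _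
  set κ : Kernel E E := R₂.condKernel with hκ
  set κ' : Kernel (E × E) E := κ.comap Prod.snd measurable_snd with hκ'
  haveI : IsMarkovKernel κ' := by
    constructor; intro p
    exact ⟨by simp [hκ', Kernel.comap_apply, measure_univ]⟩
  set M : Measure ((E × E) × E) := R₁.compProd κ' with hM
  haveI : IsProbabilityMeasure M := by
    rw [hM]; infer_instance
  have hg : Measurable fun q : (E × E) × E => (q.1.1, q.2) :=
    (measurable_fst.fst).prodMk measurable_snd
  refine ⟨M.map (fun q => (q.1.1, q.2)), ?_, ?_, ?_, ?_⟩
  · exact Measure.isProbabilityMeasure_map hg.aemeasurable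
  · rw [Measure.map_map measurable_fst hg]
    have : (Prod.fst ∘ fun q : (E × E) × E => (q.1.1, q.2))
        = (Prod.fst ∘ Prod.fst) := rfl
    rw [this, ← Measure.map_map measurable_fst measurable_fst]
    have hfst : M.map Prod.fst = R₁ := Measure.fst_compProd R₁ κ'
    rw [hfst, hR₁f]
  · -- snd marginal
    rw [Measure.map_map measurable_snd hg]
    have heq : (Prod.snd ∘ fun q : (E × E) × E => (q.1.1, q.2))
        = (Prod.snd : (E × E) × E → E) := rfl
    rw [heq]
    have hsndR₂ : R₂.map Prod.snd = Qlm y' := hcsnd y'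
    have hfstR₂ : R₂.fst = Ql y' := by rw [Measure.fst]; exact hcfst y'
    ext s hs
    rw [Measure.map_apply measurable_snd hs,
      Measure.compProd_apply (measurable_snd hs)]
    have : ∀ p : E × E, κ' p (Prod.mk p ⁻¹' (Prod.snd ⁻¹' s)) = κ p.2 s := by
      intro p
      rw [hκ', Kernel.comap_apply]
      congr 1
    refine (lintegral_congr fun p => this p).trans ?_
    have hκs : Measurable fun z : E => κ z s := Kernel.measurable_coe κ hs
    have h1 : ∫⁻ p : E × E, κ p.2 s ∂(R₁) = ∫⁻ z, κ z s ∂(R₁.map Prod.snd) := by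
      rw [lintegral_map hκs measurable_snd]
    rw [h1, hR₁s, ← hfstR₂]
    have h2 : ∫⁻ z, κ z s ∂(R₂.fst) = (R₂.fst ⊗ₘ κ) (Set.univ ×ˢ s) := by
      rw [Measure.compProd_apply (MeasurableSet.univ.prod hs)]
      congr 1 with z
      simp
    rw [h2, Measure.disintegrate R₂ R₂.condKernel, ← hsndR₂,
      Measure.map_apply measurable_snd hs]
    congr 1
    ext p
    simp
  · -- the integral bound
    have hmeas : Measurable fun p : E × E => ENNReal.ofReal (‖p.1 - p.2‖ ^ 2) := aux_meas
    rw [lintegral_map hmeas hg]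
    set f : (E × E) × E → ENNReal := fun q => ENNReal.ofReal ‖q.1.1 - q.1.2‖ with hf
    set g : (E × E) × E → ENNReal := fun q => ENNReal.ofReal ‖q.1.2 - q.2‖ with hgdef
    have hfm : Measurable f := by fun_prop
    have hgm : Measurable g := by fun_prop
    have key : ∀ q : (E × E) × E,
        ENNReal.ofReal (‖q.1.1 - q.2‖ ^ 2) ≤ (f q + g q) ^ (2 : ℝ) := by
      intro q
      have htri : ‖q.1.1 - q.2‖ ≤ ‖q.1.1 - q.1.2‖ + ‖q.1.2 - q.2‖ :=
        norm_sub_le_norm_sub_add_norm_sub _ _ _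
      rw [ofReal_sq_rpow _ (norm_nonneg _)]
      refine ENNReal.rpow_le_rpow ?_ (by norm_num)
      calc ENNReal.ofReal ‖q.1.1 - q.2‖
          ≤ ENNReal.ofReal (‖q.1.1 - q.1.2‖ + ‖q.1.2 - q.2‖) := ENNReal.ofReal_le_ofReal htri
        _ = f q + g q := ENNReal.ofReal_add (norm_nonneg _) (norm_nonneg _)
    have step1 : (∫⁻ q, ENNReal.ofReal (‖q.1.1 - q.2‖ ^ 2) ∂M) ^ ((1:ℝ)/2)
        ≤ (∫⁻ q, (f q + g q) ^ (2:ℝ) ∂M) ^ ((1:ℝ)/2) :=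
      ENNReal.rpow_le_rpow (lintegral_mono key) (by norm_num)
    have step2 : (∫⁻ q, (f q + g q) ^ (2:ℝ) ∂M) ^ ((1:ℝ)/2)
        ≤ (∫⁻ q, f q ^ (2:ℝ) ∂M) ^ ((1:ℝ)/2) + (∫⁻ q, g q ^ (2:ℝ) ∂M) ^ ((1:ℝ)/2) :=
      ENNReal.lintegral_Lp_add_le hfm.aemeasurable hgm.aemeasurable (by norm_num)
    -- identify the two integrals
    have hf2 : ∀ q : (E × E) × E, f q ^ (2:ℝ) = ENNReal.ofReal (‖q.1.1 - q.1.2‖ ^ 2) := by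
      intro q
      rw [hf, ofReal_sq_rpow _ (norm_nonneg _)]
    have hg2 : ∀ q : (E × E) × E, g q ^ (2:ℝ) = ENNReal.ofReal (‖q.1.2 - q.2‖ ^ 2) := by
      intro q
      rw [hgdef, ofReal_sq_rpow _ (norm_nonneg _)]
    have hI1 : ∫⁻ q, f q ^ (2:ℝ) ∂M ≤ ENNReal.ofReal (C₁ ^ 2 * ‖y - y'‖ ^ 2) := by
      simp_rw [hf2]
      have : ∫⁻ q : (E × E) × E, ENNReal.ofReal (‖q.1.1 - q.1.2‖ ^ 2) ∂M
          = ∫⁻ p : E × E, ENNReal.ofReal (‖p.1 - p.2‖ ^ 2) ∂(M.map Prod.fst) := by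
        rw [lintegral_map hmeas measurable_fst]
      rw [this]
      have hfst : M.map Prod.fst = R₁ := Measure.fst_compProd R₁ κ'
      rw [hfst]; exact hR₁int
    have hI2 : ∫⁻ q, g q ^ (2:ℝ) ∂M ≤ ENNReal.ofReal (C₀ * h ^ β) := by
      simp_rw [hg2]
      have hF : Measurable fun p : E × E => ENNReal.ofReal (‖p.1 - p.2‖ ^ 2) := aux_meas
      have hGm : Measurable fun q : (E × E) × E =>
          ENNReal.ofReal (‖q.1.2 - q.2‖ ^ 2) := by fun_prop
      rw [Measure.lintegral_compProd hGm]
      have hinner : ∀ p : E × E,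
          (∫⁻ z, ENNReal.ofReal (‖p.2 - z‖ ^ 2) ∂(κ' p))
          = ∫⁻ z, ENNReal.ofReal (‖p.2 - z‖ ^ 2) ∂(κ p.2) := by
        intro p; rw [hκ', Kernel.comap_apply]
      simp_rw [hinner]
      have hH : Measurable fun w : E => ∫⁻ z, ENNReal.ofReal (‖w - z‖ ^ 2) ∂(κ w) := by
        have : Measurable (Function.uncurry fun w z : E => ENNReal.ofReal (‖w - z‖ ^ 2)) := by
          fun_prop
        exact this.lintegral_kernel_prod_right
      have h1 : ∫⁻ p : E × E, (∫⁻ z, ENNReal.ofReal (‖p.2 - z‖ ^ 2) ∂(κ p.2)) ∂(R₁)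
          = ∫⁻ w, (∫⁻ z, ENNReal.ofReal (‖w - z‖ ^ 2) ∂(κ w)) ∂(R₁.map Prod.snd) := by
        rw [lintegral_map hH measurable_snd]
      have hfstR₂ : R₂.fst = Ql y' := by rw [Measure.fst]; exact hcfst y'
      rw [h1, hR₁s, ← hfstR₂]
      have h2 : ∫⁻ w, (∫⁻ z, ENNReal.ofReal (‖w - z‖ ^ 2) ∂(κ w)) ∂(R₂.fst)
          = ∫⁻ p : E × E, ENNReal.ofReal (‖p.1 - p.2‖ ^ 2) ∂(R₂.fst ⊗ₘ κ) := by
        rw [Measure.lintegral_compProd hF]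
      rw [h2, Measure.disintegrate R₂ R₂.condKernel]
      exact ha y'
    -- now bound the rpow of each
    have hb1 : (∫⁻ q, f q ^ (2:ℝ) ∂M) ^ ((1:ℝ)/2) ≤ ENNReal.ofReal (C₁ * ‖y - y'‖) := by
      calc (∫⁻ q, f q ^ (2:ℝ) ∂M) ^ ((1:ℝ)/2)
          ≤ (ENNReal.ofReal (C₁ ^ 2 * ‖y - y'‖ ^ 2)) ^ ((1:ℝ)/2) :=
            ENNReal.rpow_le_rpow hI1 (by norm_num)
        _ = ENNReal.ofReal ((C₁ ^ 2 * ‖y - y'‖ ^ 2) ^ ((1:ℝ)/2)) := by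
            rw [← ENNReal.ofReal_rpow_of_nonneg (by positivity) (by norm_num)]
        _ = ENNReal.ofReal (C₁ * ‖y - y'‖) := by
            congr 1
            rw [← Real.sqrt_eq_rpow]
            rw [show C₁ ^ 2 * ‖y - y'‖ ^ 2 = (C₁ * ‖y - y'‖) ^ 2 by ring]
            exact Real.sqrt_sq (by positivity)
    have hb2 : (∫⁻ q, g q ^ (2:ℝ) ∂M) ^ ((1:ℝ)/2)
        ≤ ENNReal.ofReal (Real.sqrt C₀ * h ^ (β/2)) := by
      calc (∫⁻ q, g q ^ (2:ℝ) ∂M) ^ ((1:ℝ)/2)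
          ≤ (ENNReal.ofReal (C₀ * h ^ β)) ^ ((1:ℝ)/2) :=
            ENNReal.rpow_le_rpow hI2 (by norm_num)
        _ = ENNReal.ofReal ((C₀ * h ^ β) ^ ((1:ℝ)/2)) := by
            rw [← ENNReal.ofReal_rpow_of_nonneg (by positivity) (by norm_num)]
        _ = ENNReal.ofReal (Real.sqrt C₀ * h ^ (β/2)) := by
            congr 1
            rw [← Real.sqrt_eq_rpow, Real.sqrt_mul hC₀.le]
            congr 1
            rw [Real.sqrt_eq_rpow, ← Real.rpow_mul hh.le]
            congr 1
            ring
    calc (∫⁻ q, ENNReal.ofReal (‖q.1.1 - q.2‖ ^ 2) ∂M) ^ ((1:ℝ)/2)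
        ≤ (∫⁻ q, f q ^ (2:ℝ) ∂M) ^ ((1:ℝ)/2) + (∫⁻ q, g q ^ (2:ℝ) ∂M) ^ ((1:ℝ)/2) :=
          le_trans step1 step2
      _ ≤ ENNReal.ofReal (C₁ * ‖y - y'‖) + ENNReal.ofReal (Real.sqrt C₀ * h ^ (β/2)) :=
          add_le_add hb1 hb2
      _ = ENNReal.ofReal (C₁ * ‖y - y'‖ + Real.sqrt C₀ * h ^ (β/2)) := by
          rw [← ENNReal.ofReal_add (by positivity) (by positivity)]
      _ ≤ ENNReal.ofReal ((C₁ + Real.sqrt C₀) * (‖y - y'‖ + h ^ (β/2))) := by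
          apply ENNReal.ofReal_le_ofReal
          have h1 : (0:ℝ) ≤ ‖y - y'‖ := norm_nonneg _
          have h2 : (0:ℝ) ≤ h ^ (β/2) := by positivity
          have h3 : (0:ℝ) ≤ Real.sqrt C₀ := Real.sqrt_nonneg _
          nlinarith
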